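/- Simulation of equi-recursive reduction: if · ⊢ₑ e₁ : A ▷ e₁' and e₁ ↪ₑ e₂, then there exists e₂' such that e₁' ↪* e₂' and · ⊢ₑ e₂ : A ▷ e₂'. -/

import Mathlib

/-- Types: Int, Top, arrow, de Bruijn type variables, and recursive types μ. -/
inductive Ty : Type
| int : Ty
| top : Ty
| arrow : Ty → Ty → Ty
| var : Nat → Ty
| mu : Ty → Ty
deriving DecidableEq

/-- Shifting of de Bruijn type variables. -/
def tshift (d c : Nat) : Ty → Ty
| .int => .int
| .top => .top
| .arrow A B => .arrow (tshift d c A) (tshift d c B)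
| .var n => if n < c then .var n else .var (n + d)
| .mu A => .mu (tshift d (c+1) A)

/-- Capture-avoiding substitution of type S for variable k. -/
def tsubst (k : Nat) (S : Ty) : Ty → Ty
| .int => .int
| .top => .top
| .arrow A B => .arrow (tsubst k S A) (tsubst k S B)
| .var n => if n = k then S else if k < n then .var (n-1) else .var n
| .mu A => .mu (tsubst (k+1) (tshift 1 0 S) A)

/-- Well-formedness: all free type variables are below n. -/
def Ty.wf : Nat → Ty → Prop
| _, .int => True
| _, .top => True
| n, .arrow A B => A.wf n ∧ B.wf n
| n, .var i => i < n
| n, .mu A => A.wf (n+1)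

/-- Brandt–Henglein inductive equi-recursive type equality H ⊢ A ≐ B. -/
inductive TyEq : List (Ty × Ty) → Ty → Ty → Prop
| assump : (A, B) ∈ H → TyEq H A B
| refl : TyEq H A A
| trans : TyEq H A B → TyEq H B C → TyEq H A C
| symm : TyEq H A B → TyEq H B A
| unfold : TyEq H (.mu A) (tsubst 0 (.mu A) A)
| arrfix : TyEq ((Ty.arrow A1 A2, Ty.arrow B1 B2) :: H) A1 B1 →
           TyEq ((Ty.arrow A1 A2, Ty.arrow B1 B2) :: H) A2 B2 →
           TyEq H (.arrow A1 A2) (.arrow B1 B2)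

/-- Cast operators, with de Bruijn cast variables (bound by cfix). -/
inductive Cast : Type
| cvar : Nat → Cast
| id : Cast
| fold : Ty → Cast
| unfold : Ty → Cast
| arrow : Cast → Cast → Cast
| seq : Cast → Cast → Cast
| cfix : Cast → Cast
deriving DecidableEq

/-- The dual (reverse) cast ¬c. -/
def Cast.dual : Cast → Cast
| .cvar i => .cvar i
| .id => .id
| .fold A => .unfold A
| .unfold A => .fold A
| .arrow c1 c2 => .arrow c1.dual c2.dual
| .seq c1 c2 => .seq c2.dual c1.dual
| .cfix c => .cfix c.dual

/-- Shifting of cast variables. -/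
def cshift (d c : Nat) : Cast → Cast
| .cvar n => if n < c then .cvar n else .cvar (n+d)
| .id => .id
| .fold A => .fold A
| .unfold A => .unfold A
| .arrow c1 c2 => .arrow (cshift d c c1) (cshift d c c2)
| .seq c1 c2 => .seq (cshift d c c1) (cshift d c c2)
| .cfix c1 => .cfix (cshift d (c+1) c1)

/-- Capture-avoiding substitution of a cast for cast variable k. -/
def csubst (k : Nat) (s : Cast) : Cast → Cast
| .cvar n => if n = k then s else if k < n then .cvar (n-1) else .cvar n
| .id => .id
| .fold A => .fold A
| .unfold A => .unfold A
| .arrow c1 c2 => .arrow (csubst k s c1) (csubst k s c2)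
| .seq c1 c2 => .seq (csubst k s c1) (csubst k s c2)
| .cfix c1 => .cfix (csubst (k+1) (cshift 1 0 s) c1)

/-- Type casting judgment 𝔼 ⊢ A ↪ B : c (cast context as de Bruijn list). -/
inductive TypCast : List (Ty × Ty) → Ty → Ty → Cast → Prop
| id : TypCast E A A .id
| arrow : TypCast E A1 B1 c1 → TypCast E A2 B2 c2 →
    TypCast E (.arrow A1 A2) (.arrow B1 B2) (.arrow c1 c2)
| unfold : TypCast E (.mu A) (tsubst 0 (.mu A) A) (.unfold (.mu A))
| fold : TypCast E (tsubst 0 (.mu A) A) (.mu A) (.fold (.mu A))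
| seq : TypCast E A B c1 → TypCast E B C c2 → TypCast E A C (.seq c1 c2)
| var : E[n]? = some (A, B) → TypCast E A B (.cvar n)
| fix : TypCast ((Ty.arrow A1 A2, Ty.arrow B1 B2) :: E)
           (.arrow A1 A2) (.arrow B1 B2) (.arrow c1 c2) →
        TypCast E (.arrow A1 A2) (.arrow B1 B2) (.cfix (.arrow c1 c2))

/-- Terms of λᵘFi (de Bruijn term variables). -/
inductive Tm : Type
| var : Nat → Tm
| lit : Int → Tm
| app : Tm → Tm → Tm
| abs : Ty → Tm → Tm
| cast : Cast → Tm → Tm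
deriving DecidableEq

def shiftTm (d c : Nat) : Tm → Tm
| .var n => if n < c then .var n else .var (n+d)
| .lit n => .lit n
| .app a b => .app (shiftTm d c a) (shiftTm d c b)
| .abs A e => .abs A (shiftTm d (c+1) e)
| .cast cc e => .cast cc (shiftTm d c e)

/-- Capture-avoiding term substitution. -/
def substTm (k : Nat) (s : Tm) : Tm → Tm
| .var n => if n = k then s else if k < n then .var (n-1) else .var n
| .lit n => .lit n
| .app a b => .app (substTm k s a) (substTm k s b)
| .abs A e => .abs A (substTm (k+1) (shiftTm 1 0 s) e)
| .cast cc e => .cast cc (substTm k s e)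

/-- Values of λᵘFi. -/
inductive Value : Tm → Prop
| lit : Value (.lit n)
| abs : Value (.abs A e)
| fold : Value v → Value (.cast (.fold A) v)
| arrow : Value v → Value (.cast (.arrow c1 c2) v)

/-- Call-by-value reduction of λᵘFi, including the cast push rules. -/
inductive Step : Tm → Tm → Prop
| beta : Value v → Step (.app (.abs A e) v) (substTm 0 v e)
| appl : Step e1 e1' → Step (.app e1 e2) (.app e1' e2)
| appr : Value v → Step e2 e2' → Step (.app v e2) (.app v e2')
| cast : Step e e' → Step (.cast c e) (.cast c e')
| castId : Value v → Step (.cast .id v) v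
| castArr : Value v1 → Value v2 →
    Step (.app (.cast (.arrow c1 c2) v1) v2)
         (.cast c2 (.app v1 (.cast c1.dual v2)))
| castSeq : Step (.cast (.seq c1 c2) e) (.cast c2 (.cast c1 e))
| castElim : Value v → Step (.cast (.unfold A) (.cast (.fold B) v)) v
| castFix : Step (.cast (.cfix c) e) (.cast (csubst 0 (.cfix c) c) e)

/-- Equi-recursive (cast-free) call-by-value reduction. -/
inductive EStep : Tm → Tm → Prop
| beta : Value v → EStep (.app (.abs A e) v) (substTm 0 v e)
| appl : EStep e1 e1' → EStep (.app e1 e2) (.app e1' e2)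
| appr : Value v → EStep e2 e2' → EStep (.app v e2) (.app v e2')

/-- Erasure of casts. -/
def erase : Tm → Tm
| .var n => .var n
| .lit n => .lit n
| .app a b => .app (erase a) (erase b)
| .abs A e => .abs A (erase e)
| .cast _ e => erase e

/-- Typing of λᵘFi. -/
inductive Typing : List Ty → Tm → Ty → Prop
| var : G[n]? = some A → Typing G (.var n) A
| lit : Typing G (.lit n) .int
| abs : Typing (A :: G) e B → Typing G (.abs A e) (.arrow A B)
| app : Typing G e1 (.arrow A B) → Typing G e2 A → Typing G (.app e1 e2) B
| cast : Typing G e A → TypCast [] A B c → Typing G (.cast c e) B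

/-- Equi-recursive typing with elaboration Γ ⊢ₑ e : A ▷ e'. -/
inductive ETyping : List Ty → Tm → Ty → Tm → Prop
| var : G[n]? = some A → ETyping G (.var n) A (.var n)
| lit : ETyping G (.lit n) .int (.lit n)
| abs : ETyping (A :: G) e B e' → ETyping G (.abs A e) (.arrow A B) (.abs A e')
| app : ETyping G e1 (.arrow A B) e1' → ETyping G e2 A e2' →
        ETyping G (.app e1 e2) B (.app e1' e2')
| eq : ETyping G e A e' → TypCast [] A B c → ETyping G e B (.cast c e')

/-- Iso-recursive Amber subtyping (de Bruijn presentation), n counts bound variable pairs. -/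
inductive AmberSub : Nat → Ty → Ty → Prop
| top : Ty.wf n A → AmberSub n A .top
| int : AmberSub n .int .int
| var : i < n → AmberSub n (.var i) (.var i)
| self : Ty.wf n (.mu A) → AmberSub n (.mu A) (.mu A)
| arrow : AmberSub n B1 A1 → AmberSub n A2 B2 → AmberSub n (.arrow A1 A2) (.arrow B1 B2)
| murec : AmberSub (n+1) A B → AmberSub n (.mu A) (.mu B)

/-- Typing of λᵘ<:Fi: λᵘFi typing plus subsumption. -/
inductive STyping : List Ty → Tm → Ty → Prop
| var : G[n]? = some A → STyping G (.var n) A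
| lit : STyping G (.lit n) .int
| abs : STyping (A :: G) e B → STyping G (.abs A e) (.arrow A B)
| app : STyping G e1 (.arrow A B) → STyping G e2 A → STyping G (.app e1 e2) B
| cast : STyping G e A → TypCast [] A B c → STyping G (.cast c e) B
| sub : STyping G e A → AmberSub 0 A B → STyping G e B

/-- Divergence under a reduction relation. -/
def Diverges (R : Tm → Tm → Prop) (e : Tm) : Prop :=
  ∀ e', Relation.ReflTransGen R e e' → ∃ e'', R e' e''

open Relation

lemma rtg_cast {c : Cast} {e e' : Tm} (h : ReflTransGen Step e e') :
    ReflTransGen Step (.cast c e) (.cast c e') := by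
  induction h with
  | refl => exact .refl
  | tail _ s ih => exact ih.tail (.cast s)

lemma rtg_appl {e e' f : Tm} (h : ReflTransGen Step e e') :
    ReflTransGen Step (.app e f) (.app e' f) := by
  induction h with
  | refl => exact .refl
  | tail _ s ih => exact ih.tail (.appl s)

lemma rtg_appr {v e e' : Tm} (hv : Value v) (h : ReflTransGen Step e e') :
    ReflTransGen Step (.app v e) (.app v e') := by
  induction h with
  | refl => exact .refl
  | tail _ s ih => exact ih.tail (.appr hv s)

lemma cshift_zero (k : Nat) (s : Cast) : cshift 0 k s = s := by
  induction s generalizing k <;> simp [cshift, *]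

lemma cshift_cshift (n k : Nat) (s : Cast) :
    cshift 1 k (cshift n k s) = cshift (n+1) k s := by
  induction s generalizing k with
  | cvar m =>
    by_cases h : m < k
    · simp [cshift, h]
    · simp only [cshift, if_neg h, if_neg (show ¬ m + n < k by omega)]
      rfl
  | _ => simp [cshift, *]
lemma TypCast.weaken {E A B c} (h : TypCast E A B c) :
    ∀ E1 E2 (D : List (Ty × Ty)), E = E1 ++ E2 →
      TypCast (E1 ++ D ++ E2) A B (cshift D.length E1.length c) := by
  induction h with
  | id => intros; exact .id
  | arrow h1 h2 ih1 ih2 => intro E1 E2 D hE; exact .arrow (ih1 E1 E2 D hE) (ih2 E1 E2 D hE)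
  | unfold => intros; exact .unfold
  | fold => intros; exact .fold
  | seq h1 h2 ih1 ih2 => intro E1 E2 D hE; exact .seq (ih1 E1 E2 D hE) (ih2 E1 E2 D hE)
  | @var E n A B hl =>
    intro E1 E2 D hE; subst hE
    simp only [cshift]
    by_cases h : n < E1.length
    · rw [if_pos h]
      refine .var ?_
      rw [List.getElem?_append_left h] at hl
      rw [List.append_assoc, List.getElem?_append_left h]
      exact hl
    · rw [if_neg h]
      refine .var ?_
      rw [List.getElem?_append_right (by omega : E1.length ≤ n)] at hl
      rw [List.getElem?_append_right (show (E1 ++ D).length ≤ n + D.length by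
        rw [List.length_append]; omega)]
      have heq : n + D.length - (E1 ++ D).length = n - E1.length := by
        rw [List.length_append]; omega
      rw [heq]; exact hl
  | @fix A1 A2 B1 B2 E c1 c2 h1 ih =>
    intro E1 E2 D hE; subst hE
    have := ih ((Ty.arrow A1 A2, Ty.arrow B1 B2) :: E1) E2 D rfl
    simp only [cshift] at this ⊢
    exact .fix this
lemma TypCast.substC {E A B c} (h : TypCast E A B c) :
    ∀ E1 E2 X Y s, E = E1 ++ (X, Y) :: E2 → TypCast E2 X Y s →
      TypCast (E1 ++ E2) A B (csubst E1.length (cshift E1.length 0 s) c) := by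
  induction h with
  | id => intros; exact .id
  | arrow h1 h2 ih1 ih2 =>
    intro E1 E2 X Y s hE hs; exact .arrow (ih1 E1 E2 X Y s hE hs) (ih2 E1 E2 X Y s hE hs)
  | unfold => intros; exact .unfold
  | fold => intros; exact .fold
  | seq h1 h2 ih1 ih2 =>
    intro E1 E2 X Y s hE hs; exact .seq (ih1 E1 E2 X Y s hE hs) (ih2 E1 E2 X Y s hE hs)
  | @var E n A B hl =>
    intro E1 E2 X Y s hE hs; subst hE
    simp only [csubst]
    rcases lt_trichotomy n E1.length with h | h | h
    · rw [if_neg (by omega), if_neg (by omega)]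
      refine .var ?_
      rw [List.getElem?_append_left h] at hl
      rw [List.getElem?_append_left h]
      exact hl
    · rw [if_pos h]
      rw [List.getElem?_append_right (by omega : E1.length ≤ n)] at hl
      rw [h] at hl; simp at hl
      obtain ⟨rfl, rfl⟩ := hl
      have := TypCast.weaken hs [] E2 E1 rfl
      simpa using this
    · rw [if_neg (by omega), if_pos (by omega)]
      refine .var ?_
      rw [List.getElem?_append_right (by omega : E1.length ≤ n)] at hl
      rw [List.getElem?_append_right (by omega : E1.length ≤ n - 1)]
      have h2 : n - E1.length = (n - E1.length - 1) + 1 := by omega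
      rw [h2] at hl; simp at hl
      have h3 : n - 1 - E1.length = n - E1.length - 1 := by omega
      rw [h3]; exact hl
  | @fix A1 A2 B1 B2 E c1 c2 h1 ih =>
    intro E1 E2 X Y s hE hs; subst hE
    have := ih ((Ty.arrow A1 A2, Ty.arrow B1 B2) :: E1) E2 X Y s rfl hs
    simp only [csubst, List.length_cons] at this ⊢
    rw [cshift_cshift]
    exact .fix this

lemma TypCast.dualc {E A B c} (h : TypCast E A B c) :
    TypCast (E.map Prod.swap) B A c.dual := by
  induction h with
  | id => exact .id
  | arrow h1 h2 ih1 ih2 => exact .arrow ih1 ih2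
  | unfold => exact .fold
  | fold => exact .unfold
  | seq h1 h2 ih1 ih2 => exact .seq ih2 ih1
  | @var E n A B hl =>
    refine .var ?_
    rw [List.getElem?_map, hl]; rfl
  | fix h1 ih => exact .fix ih
lemma ETyping.shift_inv {G e A e'} (h : ETyping G e A e') :
    ∀ d c, G.length ≤ c → shiftTm d c e = e ∧ shiftTm d c e' = e' := by
  induction h with
  | @var G n A hl =>
    intro d c hc
    have hn : n < G.length := (List.getElem?_eq_some_iff.1 hl).1
    constructor <;> simp [shiftTm, show n < c by omega]
  | lit => intro d c hc; exact ⟨rfl, rfl⟩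
  | @abs A G e B e' h ih =>
    intro d c hc
    have := ih d (c+1) (by simpa using Nat.succ_le_succ hc)
    constructor <;> simp [shiftTm, this.1, this.2]
  | app h1 h2 ih1 ih2 =>
    intro d c hc
    obtain ⟨a1, a2⟩ := ih1 d c hc; obtain ⟨b1, b2⟩ := ih2 d c hc
    constructor <;> simp [shiftTm, a1, a2, b1, b2]
  | eq h hc' ih =>
    intro d c hc
    obtain ⟨a1, a2⟩ := ih d c hc
    exact ⟨a1, by simp [shiftTm, a2]⟩

lemma ETyping.weaken_append {G e A e'} (h : ETyping G e A e') (D : List Ty) :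
    ETyping (G ++ D) e A e' := by
  induction h with
  | @var G n A hl =>
    refine .var ?_
    rw [List.getElem?_append_left (List.getElem?_eq_some_iff.1 hl).1]
    exact hl
  | lit => exact .lit
  | abs h ih => exact .abs ih
  | app h1 h2 ih1 ih2 => exact .app ih1 ih2
  | eq h hc ih => exact .eq ih hc

lemma ETyping.substE {G e B e'} (h : ETyping G e B e') :
    ∀ G1 A0 v u, G = G1 ++ [A0] → ETyping [] v A0 u →
      ETyping G1 (substTm G1.length v e) B (substTm G1.length u e') := by
  induction h with
  | @var G n T hl =>
    intro G1 A0 v u hG hvu; subst hG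
    have hn : n < G1.length + 1 := by simpa using (List.getElem?_eq_some_iff.1 hl).1
    rcases lt_or_eq_of_le (Nat.lt_succ_iff.1 hn) with h | h
    · simp only [substTm, if_neg (show ¬ n = G1.length by omega),
        if_neg (show ¬ G1.length < n by omega)]
      refine .var ?_
      rw [List.getElem?_append_left h] at hl
      exact hl
    · subst h
      simp only [substTm, if_pos rfl]
      rw [List.getElem?_append_right (le_refl _)] at hl
      simp at hl; subst hl
      have := hvu.weaken_append G1
      simpa using this
  | lit => intro G1 A0 v u hG hvu; exact .lit
  | @abs A G e B e' h ih =>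
    intro G1 A0 v u hG hvu; subst hG
    have hv := (hvu.shift_inv 1 0 (by simp)).1
    have hu := (hvu.shift_inv 1 0 (by simp)).2
    have := ih (A :: G1) A0 v u rfl hvu
    simp only [substTm, List.length_cons, hv, hu] at this ⊢
    exact .abs this
  | app h1 h2 ih1 ih2 =>
    intro G1 A0 v u hG hvu
    exact .app (ih1 G1 A0 v u hG hvu) (ih2 G1 A0 v u hG hvu)
  | eq h hc ih =>
    intro G1 A0 v u hG hvu
    exact .eq (ih G1 A0 v u hG hvu) hc
lemma canon_mu {v T u} (h : ETyping [] v T u) (hu : Value u) :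
    ∀ A, T = .mu A →
      ∃ u0, u = .cast (.fold (.mu A)) u0 ∧ Value u0 ∧
        ETyping [] v (tsubst 0 (.mu A) A) u0 := by
  intro A hT; subst hT
  cases h with
  | var hl => cases hu
  | app h1 h2 => cases hu
  | eq h hc =>
    cases hu with
    | fold hu0 =>
      generalize hM : Ty.mu A = M at hc
      cases hc with
      | fold =>
        cases hM
        exact ⟨_, rfl, hu0, h⟩
    | arrow hu0 =>
      generalize hM : Ty.mu A = M at hc
      cases hc with
      | arrow h1 h2 => cases hM
lemma castVal {E T B c} (hc : TypCast E T B c) :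
    E = [] → ∀ u v, Value u → ETyping [] v T u →
      ∃ u', ReflTransGen Step (.cast c u) u' ∧ Value u' ∧ ETyping [] v B u' := by
  induction hc with
  | id =>
    intro _ u v hu het
    exact ⟨u, .single (.castId hu), hu, het⟩
  | arrow h1 h2 ih1 ih2 =>
    intro hE u v hu het; subst hE
    exact ⟨_, .refl, .arrow hu, .eq het (.arrow h1 h2)⟩
  | @unfold E A =>
    intro hE u v hu het
    obtain ⟨u0, rfl, hu0, het0⟩ := canon_mu het hu A rfl
    exact ⟨u0, .single (.castElim hu0), hu0, het0⟩
  | @fold E A =>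
    intro hE u v hu het
    exact ⟨_, .refl, .fold hu, .eq het .fold⟩
  | seq h1 h2 ih1 ih2 =>
    intro hE u v hu het
    obtain ⟨u1, s1, hu1, het1⟩ := ih1 hE u v hu het
    obtain ⟨u2, s2, hu2, het2⟩ := ih2 hE u1 v hu1 het1
    exact ⟨u2, .head .castSeq ((rtg_cast s1).trans s2), hu2, het2⟩
  | @var E n A B hl =>
    intro hE; subst hE; simp at hl
  | @fix A1 A2 B1 B2 E c1 c2 h1 ih =>
    intro hE u v hu het; subst hE
    have hsub := TypCast.substC h1 [] [] (Ty.arrow A1 A2) (Ty.arrow B1 B2)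
      (Cast.cfix (Cast.arrow c1 c2)) rfl (.fix h1)
    simp only [List.length_nil, List.nil_append] at hsub
    rw [cshift_zero] at hsub
    refine ⟨_, .single .castFix, ?_, ?_⟩
    · simp only [csubst]
      exact .arrow hu
    · simp only [csubst]
      exact .eq het hsub
  
lemma valElab {G s T w} (h : ETyping G s T w) :
    G = [] → Value s →
      ∃ w', ReflTransGen Step w w' ∧ Value w' ∧ ETyping [] s T w' := by
  induction h with
  | var hl => intro _ hv; cases hv
  | lit => intro _ _; exact ⟨_, .refl, .lit, .lit⟩
  | abs h _ => intro hG hv; subst hG; exact ⟨_, .refl, .abs, .abs h⟩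
  | app h1 h2 _ _ => intro _ hv; cases hv
  | eq h hc ih =>
    intro hG hv; subst hG
    obtain ⟨w0, s0, hw0, het0⟩ := ih rfl hv
    obtain ⟨w', s', hw', het'⟩ := castVal hc rfl w0 _ hw0 het0
    exact ⟨w', (rtg_cast s0).trans s', hw', het'⟩
lemma betaSim {G s T w} (h : ETyping G s T w) :
    G = [] → ∀ A0 e, s = .abs A0 e → Value w →
    ∀ A1 B, T = .arrow A1 B → ∀ v u, Value u → ETyping [] v A1 u →
    ∃ r, ReflTransGen Step (.app w u) r ∧ ETyping [] (substTm 0 v e) B r := by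
  induction h with
  | var hl => intro _ _ _ hs; cases hs
  | lit => intro _ _ _ hs; cases hs
  | @abs A G e0 B0 e0' h ih =>
    intro hG A0 e hs hw A1 B hT v u hu hvu
    cases hs; cases hT; subst hG
    refine ⟨substTm 0 u e0', .single (.beta hu), ?_⟩
    have := ETyping.substE h [] A v u rfl hvu
    simpa using this
  | app h1 h2 _ _ => intro _ _ _ hs; cases hs
  | @eq G s T0 w0 B0 c h hc ih =>
    intro hG A0 e hs hw A1 B hT v u hu hvu
    subst hG hs hT
    cases hw with
    | fold hw0 =>
      generalize hM : Ty.arrow A1 B = M at hc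
      cases hc with
      | fold => cases hM
    | arrow hw0 =>
      generalize hM : Ty.arrow A1 B = M at hc
      cases hc with
      | arrow hc1 hc2 =>
        cases hM
        have hd := TypCast.dualc hc1
        obtain ⟨u1, su1, hu1, hetu1⟩ := castVal hd rfl u v hu hvu
        obtain ⟨r0, sr0, hetr0⟩ := ih rfl A0 e rfl hw0 _ _ rfl v u1 hu1 hetu1
        refine ⟨.cast _ r0, ?_, .eq hetr0 hc2⟩
        exact .head (.castArr hw0 hu)
          (((rtg_cast (rtg_appr hw0 su1)).trans (rtg_cast sr0)))
lemma simAux {G e1 A e1'} (h : ETyping G e1 A e1') :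
    G = [] → ∀ e2, EStep e1 e2 →
      ∃ e2', ReflTransGen Step e1' e2' ∧ ETyping [] e2 A e2' := by
  induction h with
  | var hl => intro _ e2 hs; cases hs
  | lit => intro _ e2 hs; cases hs
  | abs h _ => intro _ e2 hs; cases hs
  | @app G a TA TB a' b b' h1 h2 ih1 ih2 =>
    intro hG e2 hs; subst hG
    cases hs with
    | beta hv =>
      obtain ⟨w, sw, hw, hetw⟩ := valElab h1 rfl .abs
      obtain ⟨u, su, hu, hetu⟩ := valElab h2 rfl hv
      obtain ⟨r, sr, hetr⟩ := betaSim hetw rfl _ _ rfl hw _ _ rfl b u hu hetu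
      exact ⟨r, ((rtg_appl sw).trans (rtg_appr hw su)).trans sr, hetr⟩
    | appl hstep =>
      obtain ⟨a'', sa, heta⟩ := ih1 rfl _ hstep
      exact ⟨_, rtg_appl sa, .app heta h2⟩
    | appr hv hstep =>
      obtain ⟨w, sw, hw, hetw⟩ := valElab h1 rfl hv
      obtain ⟨b'', sb, hetb⟩ := ih2 rfl _ hstep
      exact ⟨_, (rtg_appl sw).trans (rtg_appr hw sb), .app hetw hetb⟩
  | eq h hc ih =>
    intro hG e2 hs
    obtain ⟨e'', se, hete⟩ := ih hG _ hs
    exact ⟨_, rtg_cast se, .eq hete hc⟩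

/-- Simulation of equi-recursive reduction by full iso-recursive reduction. -/
theorem simulation (e1 e1' e2 : Tm) (A : Ty)
    (h : ETyping [] e1 A e1') (hs : EStep e1 e2) :
    ∃ e2', Relation.ReflTransGen Step e1' e2' ∧ ETyping [] e2 A e2' :=
  simAux h rfl e2 hs
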